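/- arXiv:2412.04697 — 3 statements merged into one kernel-verified Lean document; each statement's English description precedes it below -/
import Mathlib

section
/- Fix ε > 0, a threshold τ ∈ ℝ, and a finite sequence f_1, …, f_T of real-valued queries on datasets, each of sensitivity 1 (|f_i(D) − f_i(D′)| ≤ 1 for all neighboring datasets D, D′). The AboveThreshold algorithm on input D samples τ̂ = τ + Lap(2/ε) and independent noises v_i ~ Lap(4/ε) for i = 1, 2, …, and outputs the first index i ≤ T such that f_i(D) + v_i ≥ τ̂, or a distinguished symbol ⊥ if no index i ≤ T satisfies this. Then AboveThreshold satisfies (ε, 0)-differential privacy: for every pair of neighboring datasets D, D′ and every subset S of {1, …, T} ∪ {⊥}, Pr[AboveThreshold(D) ∈ S] ≤ exp(ε)·Pr[AboveThreshold(D′) ∈ S]. -/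
open MeasureTheory ProbabilityTheory Classical

/-- The Laplace distribution on ℝ with scale `b`: density `x ↦ (1/(2b)) exp (-|x|/b)`
with respect to Lebesgue measure. -/
noncomputable def laplace (b : ℝ) : Measure ℝ :=
  MeasureTheory.volume.withDensity fun x => ENNReal.ofReal ((1 / (2 * b)) * Real.exp (-|x| / b))

/-- The output space `{1, …, T} ∪ {⊥}` is modelled as `Option (Fin T)` with the
discrete σ-algebra. -/
instance (T : ℕ) : MeasurableSpace (Option (Fin T)) := ⊤

open scoped ENNReal

instance laplace.sigmaFinite (b : ℝ) : SigmaFinite (laplace b) := by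
  unfold laplace; infer_instance

lemma laplace_map_le (b s : ℝ) (hb : 0 < b) :
    (laplace b).map (· + s) ≤ ENNReal.ofReal (Real.exp (|s| / b)) • laplace b := by
  refine Measure.le_iff.mpr fun A hA => ?_
  have hmeas : Measurable fun x : ℝ => x + s := measurable_add_const s
  set p : ℝ → ℝ≥0∞ := fun x => ENNReal.ofReal ((1 / (2 * b)) * Real.exp (-|x| / b)) with hp
  have hApre : MeasurableSet ((fun x : ℝ => x + s) ⁻¹' A) := hmeas hA
  rw [Measure.map_apply hmeas hA, Measure.smul_apply, smul_eq_mul]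
  have e1 : laplace b ((fun x : ℝ => x + s) ⁻¹' A)
      = ∫⁻ x, ((fun x : ℝ => x + s) ⁻¹' A).indicator p x := by
    rw [laplace, withDensity_apply _ hApre, ← lintegral_indicator hApre, hp]
  have e2 : (fun x => ((fun x : ℝ => x + s) ⁻¹' A).indicator p x)
      = fun x => A.indicator (fun y => p (y - s)) (x + s) := by
    funext x
    by_cases hx : x + s ∈ A <;>
      simp [Set.indicator, hx, Set.mem_preimage, add_sub_cancel_right]
  have e3 : ∫⁻ x, A.indicator (fun y => p (y - s)) (x + s) ∂volume
      = ∫⁻ y, A.indicator (fun y => p (y - s)) y ∂volume :=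
    lintegral_add_right_eq_self _ s
  have e4 : ∫⁻ y, A.indicator (fun y => p (y - s)) y ∂volume
      ≤ ENNReal.ofReal (Real.exp (|s| / b)) * ∫⁻ y, A.indicator p y ∂volume := by
    rw [← lintegral_const_mul' _ _ ENNReal.ofReal_ne_top]
    refine lintegral_mono fun y => ?_
    by_cases hy : y ∈ A
    · simp only [Set.indicator_of_mem hy, hp]
      rw [← ENNReal.ofReal_mul (Real.exp_nonneg _)]
      refine ENNReal.ofReal_le_ofReal ?_
      have h1 : Real.exp (-|y - s| / b) ≤ Real.exp (|s| / b) * Real.exp (-|y| / b) := by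
        rw [← Real.exp_add]
        refine Real.exp_le_exp.mpr ?_
        rw [← add_div]
        have h := abs_sub_abs_le_abs_sub y (y - s)
        have h2 : y - (y - s) = s := by ring
        rw [h2] at h
        gcongr
        linarith
      calc 1 / (2 * b) * Real.exp (-|y - s| / b)
          ≤ 1 / (2 * b) * (Real.exp (|s| / b) * Real.exp (-|y| / b)) := by
            refine mul_le_mul_of_nonneg_left h1 (by positivity)
        _ = Real.exp (|s| / b) * (1 / (2 * b) * Real.exp (-|y| / b)) := by ring
    · simp [Set.indicator_of_notMem hy]
  have e5 : ∫⁻ y, A.indicator p y ∂volume = laplace b A := by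
    rw [laplace, withDensity_apply _ hA, ← lintegral_indicator hA, hp]
  calc laplace b ((fun x : ℝ => x + s) ⁻¹' A)
      = ∫⁻ x, A.indicator (fun y => p (y - s)) (x + s) ∂volume := by rw [e1, e2]
    _ = ∫⁻ y, A.indicator (fun y => p (y - s)) y ∂volume := e3
    _ ≤ ENNReal.ofReal (Real.exp (|s| / b)) * ∫⁻ y, A.indicator p y ∂volume := e4
    _ = ENNReal.ofReal (Real.exp (|s| / b)) * laplace b A := by rw [e5]

lemma prod_mono' {α β : Type*} [MeasurableSpace α] [MeasurableSpace β]
    {μ μ' : Measure α} {ν ν' : Measure β} [SFinite ν] [SFinite ν']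
    (h1 : μ ≤ μ') (h2 : ν ≤ ν') : μ.prod ν ≤ μ'.prod ν' := by
  refine Measure.le_iff.mpr fun s hs => ?_
  rw [Measure.prod_apply hs, Measure.prod_apply hs]
  calc ∫⁻ x, ν (Prod.mk x ⁻¹' s) ∂μ ≤ ∫⁻ x, ν' (Prod.mk x ⁻¹' s) ∂μ :=
        lintegral_mono fun x => h2 _
    _ ≤ ∫⁻ x, ν' (Prod.mk x ⁻¹' s) ∂μ' := lintegral_mono' h1 le_rfl

lemma prod_smul_left' {α β : Type*} [MeasurableSpace α] [MeasurableSpace β] (c : ℝ≥0∞)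
    (μ : Measure α) (ν : Measure β) [SFinite ν] :
    (c • μ).prod ν = c • (μ.prod ν) := by
  ext s hs
  rw [Measure.prod_apply hs, Measure.smul_apply, Measure.prod_apply hs,
    lintegral_smul_measure, smul_eq_mul]

lemma prod_smul_right' {α β : Type*} [MeasurableSpace α] [MeasurableSpace β] (c : ℝ≥0∞)
    (hc : c ≠ ⊤) (μ : Measure α) (ν : Measure β) [SFinite ν] :
    μ.prod (c • ν) = c • (μ.prod ν) := by
  ext s hs
  rw [Measure.prod_apply hs, Measure.smul_apply, Measure.prod_apply hs, smul_eq_mul,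
    ← lintegral_const_mul' _ _ hc]
  simp [Measure.smul_apply, smul_eq_mul]

lemma find?_eq_none_iff' {n : ℕ} {p : Fin n → Prop} [DecidablePred p] :
    Fin.find? (fun i => decide (p i)) = none ↔ ∀ i, ¬ p i := by
  simp [Fin.find?_eq_none_iff]

lemma find?_eq_some_iff' {n : ℕ} {p : Fin n → Prop} [DecidablePred p] {i : Fin n} :
    Fin.find? (fun i => decide (p i)) = some i ↔ p i ∧ ∀ j, p j → i ≤ j := by
  simp only [Fin.find?_eq_some_iff, decide_eq_true_eq, decide_eq_false_iff_not]
  exact and_congr_right fun _ => ⟨fun h j hj => not_lt.mp fun hlt => h j hlt hj,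
    fun h j hj hpj => absurd (h j hpj) (not_le.mpr hj)⟩

lemma measurable_find_pre (τ : ℝ) (T : ℕ) {Dataset : Type*} (f : Fin T → Dataset → ℝ)
    (D : Dataset) (o : Option (Fin T)) :
    MeasurableSet
      ((fun ω : ℝ × (Fin T → ℝ) => Fin.find? fun i => f i D + ω.2 i ≥ τ + ω.1) ⁻¹' {o}) := by
  have hP : ∀ j : Fin T, MeasurableSet {ω : ℝ × (Fin T → ℝ) | τ + ω.1 ≤ f j D + ω.2 j} :=
    fun j => measurableSet_le (measurable_const.add measurable_fst)
      (measurable_const.add ((measurable_pi_apply j).comp measurable_snd))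
  cases o with
  | none =>
    have heq : ((fun ω : ℝ × (Fin T → ℝ) => Fin.find? fun i => f i D + ω.2 i ≥ τ + ω.1) ⁻¹' {none})
        = ⋂ j, {ω : ℝ × (Fin T → ℝ) | τ + ω.1 ≤ f j D + ω.2 j}ᶜ := by
      ext ω; simp [find?_eq_none_iff']
    rw [heq]
    exact MeasurableSet.iInter fun j => (hP j).compl
  | some i =>
    have heq : ((fun ω : ℝ × (Fin T → ℝ) => Fin.find? fun i => f i D + ω.2 i ≥ τ + ω.1) ⁻¹' {some i})
        = {ω : ℝ × (Fin T → ℝ) | τ + ω.1 ≤ f i D + ω.2 i} ∩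
          ⋂ j, {ω : ℝ × (Fin T → ℝ) | τ + ω.1 ≤ f j D + ω.2 j → i ≤ j} := by
      ext ω
      simp only [Set.mem_preimage, Set.mem_singleton_iff, find?_eq_some_iff', Set.mem_inter_iff,
        Set.mem_setOf_eq, Set.mem_iInter, ge_iff_le]
    rw [heq]
    refine (hP i).inter (MeasurableSet.iInter fun j => ?_)
    by_cases hij : i ≤ j
    · have : {ω : ℝ × (Fin T → ℝ) | τ + ω.1 ≤ f j D + ω.2 j → i ≤ j} = Set.univ := by
        ext ω; simp [hij]
      rw [this]; exact MeasurableSet.univ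
    · have : {ω : ℝ × (Fin T → ℝ) | τ + ω.1 ≤ f j D + ω.2 j → i ≤ j}
          = {ω : ℝ × (Fin T → ℝ) | τ + ω.1 ≤ f j D + ω.2 j}ᶜ := by
        ext ω; simp [hij]
      rw [this]; exact (hP j).compl

lemma key_singleton (ε : ℝ) (hε : 0 < ε) (τ : ℝ) (T : ℕ)
    {Dataset : Type*} (f : Fin T → Dataset → ℝ) (D D' : Dataset)
    (hsens : ∀ j, |f j D - f j D'| ≤ 1) (o : Option (Fin T)) :
    ((laplace (2 / ε)).prod (Measure.pi fun _ : Fin T => laplace (4 / ε)))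
      ((fun ω : ℝ × (Fin T → ℝ) => Fin.find? fun i => f i D + ω.2 i ≥ τ + ω.1) ⁻¹' {o})
      ≤ ENNReal.ofReal (Real.exp ε) *
        ((laplace (2 / ε)).prod (Measure.pi fun _ : Fin T => laplace (4 / ε)))
      ((fun ω : ℝ × (Fin T → ℝ) => Fin.find? fun i => f i D' + ω.2 i ≥ τ + ω.1) ⁻¹' {o}) := by
  have hb2 : (0:ℝ) < 2 / ε := by positivity
  have hb4 : (0:ℝ) < 4 / ε := by positivity
  have hL1 : (laplace (2/ε)).map (· + 1) ≤ ENNReal.ofReal (Real.exp (ε/2)) • laplace (2/ε) := by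
    have h := laplace_map_le (2/ε) 1 hb2
    have habs : |(1:ℝ)| / (2 / ε) = ε / 2 := by
      rw [abs_one]; field_simp
    rwa [habs] at h
  have hL2 : (laplace (4/ε)).map (· + 2) ≤ ENNReal.ofReal (Real.exp (ε/2)) • laplace (4/ε) := by
    have h := laplace_map_le (4/ε) 2 hb4
    have habs : |(2:ℝ)| / (4 / ε) = ε / 2 := by
      rw [abs_two]; rw [div_div_eq_mul_div]; ring_nf
    rwa [habs] at h
  have hDD' : ∀ j, f j D' ≤ f j D + 1 ∧ f j D ≤ f j D' + 1 := fun j => by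
    have h := abs_sub_le_iff.mp (hsens j)
    constructor <;> linarith [h.1, h.2]
  have hsmul_le : (ENNReal.ofReal (Real.exp (ε/2)) : ℝ≥0∞) ≤ ENNReal.ofReal (Real.exp ε) :=
    ENNReal.ofReal_le_ofReal (Real.exp_le_exp.mpr (by linarith))
  have hBD' : MeasurableSet
      ((fun ω : ℝ × (Fin T → ℝ) => Fin.find? fun i => f i D' + ω.2 i ≥ τ + ω.1) ⁻¹' {o}) :=
    measurable_find_pre τ T f D' o
  cases o with
  | none =>
    set Φ₀ : ℝ × (Fin T → ℝ) → ℝ × (Fin T → ℝ) :=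
      Prod.map (· + (1:ℝ)) (id : (Fin T → ℝ) → (Fin T → ℝ)) with hΦ₀
    have hΦmeas : Measurable Φ₀ := (measurable_add_const 1).prodMap measurable_id
    have hsub : ((fun ω : ℝ × (Fin T → ℝ) => Fin.find? fun i => f i D + ω.2 i ≥ τ + ω.1) ⁻¹' {none})
        ⊆ Φ₀ ⁻¹' ((fun ω : ℝ × (Fin T → ℝ) => Fin.find? fun i => f i D' + ω.2 i ≥ τ + ω.1) ⁻¹' {none}) := by
      intro ω hω
      simp only [Set.mem_preimage, Set.mem_singleton_iff, find?_eq_none_iff', hΦ₀,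
        Prod.map, id_eq, ge_iff_le, not_le] at hω ⊢
      intro j
      have h := (hDD' j).1
      have hj := hω j
      linarith
    have hmap : ((laplace (2/ε)).prod (Measure.pi fun _ : Fin T => laplace (4/ε))).map Φ₀
        ≤ ENNReal.ofReal (Real.exp ε) • ((laplace (2/ε)).prod (Measure.pi fun _ : Fin T => laplace (4/ε))) := by
      have heq : ((laplace (2/ε)).prod (Measure.pi fun _ : Fin T => laplace (4/ε))).map Φ₀
          = ((laplace (2/ε)).map (· + 1)).prod (Measure.pi fun _ : Fin T => laplace (4/ε)) := by
        rw [hΦ₀, ← Measure.map_prod_map _ _ (measurable_add_const 1) measurable_id,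
          Measure.map_id]
      rw [heq]
      calc ((laplace (2/ε)).map (· + 1)).prod (Measure.pi fun _ : Fin T => laplace (4/ε))
          ≤ (ENNReal.ofReal (Real.exp (ε/2)) • laplace (2/ε)).prod
              (Measure.pi fun _ : Fin T => laplace (4/ε)) := prod_mono' hL1 le_rfl
        _ = ENNReal.ofReal (Real.exp (ε/2)) •
              ((laplace (2/ε)).prod (Measure.pi fun _ : Fin T => laplace (4/ε))) :=
            prod_smul_left' _ _ _
        _ ≤ ENNReal.ofReal (Real.exp ε) •
              ((laplace (2/ε)).prod (Measure.pi fun _ : Fin T => laplace (4/ε))) := by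
            refine Measure.le_iff'.mpr fun s => ?_
            simp only [Measure.smul_apply, smul_eq_mul]
            exact mul_le_mul_left hsmul_le _
    calc ((laplace (2/ε)).prod (Measure.pi fun _ : Fin T => laplace (4/ε)))
          ((fun ω : ℝ × (Fin T → ℝ) => Fin.find? fun i => f i D + ω.2 i ≥ τ + ω.1) ⁻¹' {none})
        ≤ ((laplace (2/ε)).prod (Measure.pi fun _ : Fin T => laplace (4/ε)))
          (Φ₀ ⁻¹' ((fun ω : ℝ × (Fin T → ℝ) => Fin.find? fun i => f i D' + ω.2 i ≥ τ + ω.1) ⁻¹' {none})) :=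
          measure_mono hsub
      _ = (((laplace (2/ε)).prod (Measure.pi fun _ : Fin T => laplace (4/ε))).map Φ₀)
          ((fun ω : ℝ × (Fin T → ℝ) => Fin.find? fun i => f i D' + ω.2 i ≥ τ + ω.1) ⁻¹' {none}) :=
          (Measure.map_apply hΦmeas hBD').symm
      _ ≤ (ENNReal.ofReal (Real.exp ε) • ((laplace (2/ε)).prod (Measure.pi fun _ : Fin T => laplace (4/ε))))
          ((fun ω : ℝ × (Fin T → ℝ) => Fin.find? fun i => f i D' + ω.2 i ≥ τ + ω.1) ⁻¹' {none}) :=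
          Measure.le_iff'.mp hmap _
      _ = ENNReal.ofReal (Real.exp ε) *
          ((laplace (2/ε)).prod (Measure.pi fun _ : Fin T => laplace (4/ε)))
          ((fun ω : ℝ × (Fin T → ℝ) => Fin.find? fun i => f i D' + ω.2 i ≥ τ + ω.1) ⁻¹' {none}) := by
          rw [Measure.smul_apply, smul_eq_mul]
  | some i =>
    have hT : 0 < T := i.pos
    obtain ⟨n, rfl⟩ : ∃ n, T = n + 1 := ⟨T - 1, by omega⟩
    set e := MeasurableEquiv.piFinSuccAbove (fun _ : Fin (n+1) => ℝ) i with he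
    have hprese : MeasurePreserving e (Measure.pi fun _ : Fin (n+1) => laplace (4/ε))
        ((laplace (4/ε)).prod (Measure.pi fun _ : Fin n => laplace (4/ε))) :=
      measurePreserving_piFinSuccAbove (fun _ : Fin (n+1) => laplace (4 / ε)) i
    set E := (MeasurableEquiv.refl ℝ).prodCongr e with hE
    set ν := (laplace (2/ε)).prod
      ((laplace (4/ε)).prod (Measure.pi fun _ : Fin n => laplace (4/ε))) with hν
    set μ := (laplace (2/ε)).prod (Measure.pi fun _ : Fin (n+1) => laplace (4/ε)) with hμ
    have hpresE : MeasurePreserving E μ ν := (MeasurePreserving.id (laplace (2/ε))).prod hprese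
    set c : Fin (n+1) → ℝ := fun j => if j = i then 2 else 0 with hc
    set Φ : ℝ × (Fin (n+1) → ℝ) → ℝ × (Fin (n+1) → ℝ) :=
      fun ω => (ω.1 + 1, fun j => ω.2 j + c j) with hΦ
    have hΦmeas : Measurable Φ := (measurable_fst.add_const 1).prodMk
      (measurable_pi_iff.mpr fun j => (measurable_snd.eval (X := fun _ => ℝ) (a := j)).add_const (c j))
    set Ψ : ℝ × (ℝ × (Fin n → ℝ)) → ℝ × (ℝ × (Fin n → ℝ)) :=
      Prod.map (· + (1:ℝ)) (Prod.map (· + (2:ℝ)) id) with hΨ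
    have hΨmeas : Measurable Ψ :=
      (measurable_add_const 1).prodMap ((measurable_add_const 2).prodMap measurable_id)
    have hconj : ⇑E ∘ Φ = Ψ ∘ ⇑E := by
      funext ω
      simp only [Function.comp_apply, hΦ, hΨ, hE, he, MeasurableEquiv.prodCongr,
        MeasurableEquiv.coe_mk, Equiv.prodCongr_apply, Prod.map, MeasurableEquiv.refl_apply,
        MeasurableEquiv.piFinSuccAbove_apply, id_eq]
      refine Prod.ext rfl (Prod.ext ?_ ?_)
      · simp [hc]
      · funext j
        simp [Fin.removeNth, hc, Fin.succAbove_ne]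
    have hmapPsi : ν.map Ψ ≤ ENNReal.ofReal (Real.exp ε) • ν := by
      have hinner : (((laplace (4/ε)).prod (Measure.pi fun _ : Fin n => laplace (4/ε))).map
            (Prod.map (· + (2:ℝ)) (id : (Fin n → ℝ) → (Fin n → ℝ))))
          = ((laplace (4/ε)).map (· + 2)).prod (Measure.pi fun _ : Fin n => laplace (4/ε)) := by
        rw [← Measure.map_prod_map _ _ (measurable_add_const 2) measurable_id, Measure.map_id]
      have heq : ν.map Ψ = ((laplace (2/ε)).map (· + 1)).prod
          (((laplace (4/ε)).map (· + 2)).prod (Measure.pi fun _ : Fin n => laplace (4/ε))) := by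
        rw [hν, hΨ, ← Measure.map_prod_map _ _ (measurable_add_const 1)
          ((measurable_add_const 2).prodMap measurable_id), hinner]
      rw [heq]
      calc ((laplace (2/ε)).map (· + 1)).prod
            (((laplace (4/ε)).map (· + 2)).prod (Measure.pi fun _ : Fin n => laplace (4/ε)))
          ≤ (ENNReal.ofReal (Real.exp (ε/2)) • laplace (2/ε)).prod
              ((ENNReal.ofReal (Real.exp (ε/2)) • laplace (4/ε)).prod
                (Measure.pi fun _ : Fin n => laplace (4/ε))) :=
            prod_mono' hL1 (prod_mono' hL2 le_rfl)
        _ = (ENNReal.ofReal (Real.exp (ε/2)) * ENNReal.ofReal (Real.exp (ε/2))) • ν := by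
            rw [prod_smul_left', prod_smul_left', prod_smul_right' _ ENNReal.ofReal_ne_top,
              smul_smul, hν]
        _ = ENNReal.ofReal (Real.exp ε) • ν := by
            rw [← ENNReal.ofReal_mul (Real.exp_nonneg _), ← Real.exp_add, add_halves]
    have hmapPhi : μ.map Φ ≤ ENNReal.ofReal (Real.exp ε) • μ := by
      have hPhieq : Φ = ⇑E.symm ∘ Ψ ∘ ⇑E := by
        funext ω
        have h := congrFun hconj ω
        simp only [Function.comp_apply] at h ⊢
        rw [← h, MeasurableEquiv.symm_apply_apply]
      have h1 : μ.map Φ = ((μ.map E).map Ψ).map E.symm := by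
        rw [Measure.map_map hΨmeas E.measurable,
          Measure.map_map E.symm.measurable (hΨmeas.comp E.measurable), hPhieq]
      rw [h1, hpresE.map_eq]
      calc (ν.map Ψ).map E.symm
          ≤ (ENNReal.ofReal (Real.exp ε) • ν).map E.symm :=
            Measure.map_mono hmapPsi E.symm.measurable
        _ = ENNReal.ofReal (Real.exp ε) • (ν.map E.symm) := Measure.map_smul _ _ _
        _ = ENNReal.ofReal (Real.exp ε) • μ := by
            rw [(MeasurePreserving.symm E hpresE).map_eq]
    have hsub : ((fun ω : ℝ × (Fin (n+1) → ℝ) =>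
          Fin.find? fun k => f k D + ω.2 k ≥ τ + ω.1) ⁻¹' {some i})
        ⊆ Φ ⁻¹' ((fun ω : ℝ × (Fin (n+1) → ℝ) =>
          Fin.find? fun k => f k D' + ω.2 k ≥ τ + ω.1) ⁻¹' {some i}) := by
      intro ω hω
      simp only [Set.mem_preimage, Set.mem_singleton_iff, find?_eq_some_iff', ge_iff_le,
        hΦ] at hω ⊢
      obtain ⟨h1, h2⟩ := hω
      constructor
      · have hd := (hDD' i).2
        have hci : c i = 2 := by simp [hc]
        rw [hci]
        linarith
      · intro j hj
        by_cases hij : i ≤ j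
        · exact hij
        · have hji : ¬ j = i := fun h => hij (by rw [h])
          have hcj : c j = 0 := by simp [hc, hji]
          rw [hcj] at hj
          refine h2 j ?_
          have hd := (hDD' j).1
          linarith
    calc μ ((fun ω : ℝ × (Fin (n+1) → ℝ) =>
            Fin.find? fun k => f k D + ω.2 k ≥ τ + ω.1) ⁻¹' {some i})
        ≤ μ (Φ ⁻¹' ((fun ω : ℝ × (Fin (n+1) → ℝ) =>
            Fin.find? fun k => f k D' + ω.2 k ≥ τ + ω.1) ⁻¹' {some i})) := measure_mono hsub
      _ = (μ.map Φ) ((fun ω : ℝ × (Fin (n+1) → ℝ) =>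
            Fin.find? fun k => f k D' + ω.2 k ≥ τ + ω.1) ⁻¹' {some i}) :=
          (Measure.map_apply hΦmeas hBD').symm
      _ ≤ (ENNReal.ofReal (Real.exp ε) • μ) ((fun ω : ℝ × (Fin (n+1) → ℝ) =>
            Fin.find? fun k => f k D' + ω.2 k ≥ τ + ω.1) ⁻¹' {some i}) :=
          Measure.le_iff'.mp hmapPhi _
      _ = ENNReal.ofReal (Real.exp ε) * μ ((fun ω : ℝ × (Fin (n+1) → ℝ) =>
            Fin.find? fun k => f k D' + ω.2 k ≥ τ + ω.1) ⁻¹' {some i}) := by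
          rw [Measure.smul_apply, smul_eq_mul]


/-- `AboveThreshold` on input `D`: sample `τ̂ = τ + Lap(2/ε)` and independent noises
`v i ~ Lap(4/ε)`, and output the first index `i` with `f i D + v i ≥ τ̂`, or `⊥` (`none`)
if there is none. It satisfies `(ε, 0)`-differential privacy. -/
theorem aboveThreshold_dp
    {Dataset : Type*} (Neighbor : Dataset → Dataset → Prop)
    (ε : ℝ) (hε : 0 < ε) (τ : ℝ) (T : ℕ) (f : Fin T → Dataset → ℝ)
    (hsens : ∀ i D D', Neighbor D D' → |f i D - f i D'| ≤ 1)
    (AboveThreshold : Dataset → Measure (Option (Fin T)))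
    (hAT : ∀ D, AboveThreshold D =
      Measure.map
        (fun ω : ℝ × (Fin T → ℝ) => Fin.find? fun i => f i D + ω.2 i ≥ τ + ω.1)
        ((laplace (2 / ε)).prod (Measure.pi fun _ : Fin T => laplace (4 / ε))))
    (D D' : Dataset) (hN : Neighbor D D') (S : Set (Option (Fin T))) :
    AboveThreshold D S ≤ ENNReal.ofReal (Real.exp ε) * AboveThreshold D' S := by
  rw [hAT D, hAT D']
  have hgD : Measurable (fun ω : ℝ × (Fin T → ℝ) => Fin.find? fun i => f i D + ω.2 i ≥ τ + ω.1) :=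
    measurable_to_countable fun ω => measurable_find_pre τ T f D _
  have hgD' : Measurable (fun ω : ℝ × (Fin T → ℝ) => Fin.find? fun i => f i D' + ω.2 i ≥ τ + ω.1) :=
    measurable_to_countable fun ω => measurable_find_pre τ T f D' _
  have hStop : MeasurableSet S := MeasurableSpace.measurableSet_top
  rw [Measure.map_apply hgD hStop, Measure.map_apply hgD' hStop]
  have hdec : ∀ E : Dataset,
      (fun ω : ℝ × (Fin T → ℝ) => Fin.find? fun i => f i E + ω.2 i ≥ τ + ω.1) ⁻¹' S
      = ⋃ o ∈ S, (fun ω : ℝ × (Fin T → ℝ) => Fin.find? fun i => f i E + ω.2 i ≥ τ + ω.1) ⁻¹' {o} := by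
    intro E; ext ω; simp
  have hdisj : ∀ E : Dataset, S.PairwiseDisjoint
      (fun o => (fun ω : ℝ × (Fin T → ℝ) => Fin.find? fun i => f i E + ω.2 i ≥ τ + ω.1) ⁻¹' {o}) :=
    fun E o _ o' _ hne => (Set.disjoint_singleton.mpr hne).preimage _
  rw [hdec D, hdec D',
    measure_biUnion (Set.to_countable S) (hdisj D) (fun o _ => measurable_find_pre τ T f D o),
    measure_biUnion (Set.to_countable S) (hdisj D') (fun o _ => measurable_find_pre τ T f D' o)]
  calc (∑' o : S, ((laplace (2 / ε)).prod (Measure.pi fun _ : Fin T => laplace (4 / ε)))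
          ((fun ω : ℝ × (Fin T → ℝ) => Fin.find? fun i => f i D + ω.2 i ≥ τ + ω.1) ⁻¹' {(o : Option (Fin T))}))
      ≤ ∑' o : S, ENNReal.ofReal (Real.exp ε) *
          ((laplace (2 / ε)).prod (Measure.pi fun _ : Fin T => laplace (4 / ε)))
          ((fun ω : ℝ × (Fin T → ℝ) => Fin.find? fun i => f i D' + ω.2 i ≥ τ + ω.1) ⁻¹' {(o : Option (Fin T))}) :=
        ENNReal.tsum_le_tsum fun o =>
          key_singleton ε hε τ T f D D' (fun j => hsens j D D' hN) o
    _ = ENNReal.ofReal (Real.exp ε) * ∑' o : S,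
          ((laplace (2 / ε)).prod (Measure.pi fun _ : Fin T => laplace (4 / ε)))
          ((fun ω : ℝ × (Fin T → ℝ) => Fin.find? fun i => f i D' + ω.2 i ≥ τ + ω.1) ⁻¹' {(o : Option (Fin T))}) :=
        ENNReal.tsum_mul_left
end

section
/- Let b > 0 and let X be a random variable with distribution Lap(b). For all real numbers μ, μ′ with |μ − μ′| ≤ Δ and every Borel set S ⊆ ℝ, Pr[μ + X ∈ S] ≤ exp(Δ/b)·Pr[μ′ + X ∈ S]. Consequently, for any real-valued query f on datasets with |f(D) − f(D′)| ≤ Δ for all neighboring D, D′, the Laplace mechanism D ↦ f(D) + Lap(Δ/ε) satisfies (ε, 0)-differential privacy. -/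
open MeasureTheory ProbabilityTheory

lemma laplace_density_measurable (b μ : ℝ) :
    Measurable fun y : ℝ => ENNReal.ofReal ((1 / (2 * b)) * Real.exp (-|y - μ| / b)) := by
  apply Measurable.ennreal_ofReal
  exact (measurable_const.mul ((((measurable_id.sub measurable_const).abs.neg).div_const b).exp))

lemma laplace_map_apply (b μ : ℝ) (S : Set ℝ) (hS : MeasurableSet S) :
    Measure.map (fun x => μ + x) (laplace b) S
      = ∫⁻ y in S, ENNReal.ofReal ((1 / (2 * b)) * Real.exp (-|y - μ| / b)) := by
  rw [Measure.map_apply (measurable_const_add μ) hS, laplace,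
    withDensity_apply _ ((measurable_const_add μ) hS)]
  have h := (measurePreserving_add_left (volume : Measure ℝ) μ).setLIntegral_comp_preimage
    hS (laplace_density_measurable b μ)
  rw [← h]
  apply setLIntegral_congr_fun ((measurable_const_add μ) hS)
  intro x _
  simp

lemma laplace_shift_le (b : ℝ) (hb : 0 < b) (Δ : ℝ) (μ μ' : ℝ) (hμ : |μ - μ'| ≤ Δ)
    (S : Set ℝ) (hS : MeasurableSet S) :
    Measure.map (fun x => μ + x) (laplace b) S ≤
      ENNReal.ofReal (Real.exp (Δ / b)) * Measure.map (fun x => μ' + x) (laplace b) S := by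
  rw [laplace_map_apply b μ S hS, laplace_map_apply b μ' S hS,
    ← lintegral_const_mul _ (laplace_density_measurable b μ')]
  apply setLIntegral_mono' hS
  intro y _
  rw [← ENNReal.ofReal_mul (Real.exp_nonneg _)]
  apply ENNReal.ofReal_le_ofReal
  have h1 : |y - μ| ≥ |y - μ'| - Δ := by
    have := abs_sub_abs_le_abs_sub (y - μ') (y - μ)
    have h2 : (y - μ') - (y - μ) = μ - μ' := by ring
    rw [h2] at this
    linarith
  have hexp : Real.exp (-|y - μ| / b) ≤ Real.exp (Δ / b) * Real.exp (-|y - μ'| / b) := by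
    rw [← Real.exp_add]
    apply Real.exp_le_exp.mpr
    rw [← add_div]
    apply div_le_div_of_nonneg_right _ hb.le
    linarith
  have hc : (0:ℝ) ≤ 1 / (2 * b) := by positivity
  calc 1 / (2 * b) * Real.exp (-|y - μ| / b)
      ≤ 1 / (2 * b) * (Real.exp (Δ / b) * Real.exp (-|y - μ'| / b)) := by
        exact mul_le_mul_of_nonneg_left hexp hc
    _ = Real.exp (Δ / b) * (1 / (2 * b) * Real.exp (-|y - μ'| / b)) := by ring

lemma laplace_zero : laplace 0 = 0 := by
  rw [laplace]
  have : (fun x : ℝ => ENNReal.ofReal ((1 / (2 * 0)) * Real.exp (-|x| / 0))) = fun _ => 0 := by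
    funext x; simp
  rw [this]; exact withDensity_zero

/-- Laplace shift bound and the Laplace mechanism.  (1) If `X ~ Lap(b)` and
`|μ - μ'| ≤ Δ`, then `Pr[μ + X ∈ S] ≤ exp (Δ/b) * Pr[μ' + X ∈ S]` for every Borel `S`.
(2) Consequently, for a query `f` of sensitivity `Δ` (w.r.t. a neighboring relation),
the mechanism `D ↦ f D + Lap(Δ/ε)` is `(ε, 0)`-differentially private. -/
theorem laplace_mechanism_dp (b : ℝ) (hb : 0 < b) (Δ : ℝ) :
    (∀ μ μ' : ℝ, |μ - μ'| ≤ Δ → ∀ S : Set ℝ, MeasurableSet S →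
      Measure.map (fun x => μ + x) (laplace b) S ≤
        ENNReal.ofReal (Real.exp (Δ / b)) * Measure.map (fun x => μ' + x) (laplace b) S)
    ∧
    (∀ (Dataset : Type) (Neighbor : Dataset → Dataset → Prop) (ε : ℝ), 0 < ε →
      ∀ f : Dataset → ℝ, (∀ D D', Neighbor D D' → |f D - f D'| ≤ Δ) →
        ∀ D D', Neighbor D D' → ∀ S : Set ℝ, MeasurableSet S →
          Measure.map (fun x => f D + x) (laplace (Δ / ε)) S ≤
            ENNReal.ofReal (Real.exp ε) * Measure.map (fun x => f D' + x) (laplace (Δ / ε)) S) := by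
  constructor
  · intro μ μ' hμ S hS
    exact laplace_shift_le b hb Δ μ μ' hμ S hS
  · intro Dataset Neighbor ε hε f hsens D D' hDD' S hS
    have hΔ0 : 0 ≤ Δ := le_trans (abs_nonneg _) (hsens D D' hDD')
    rcases eq_or_lt_of_le hΔ0 with hΔ | hΔ
    · rw [← hΔ]
      simp [laplace_zero, Measure.map_zero]
    · have hbε : 0 < Δ / ε := div_pos hΔ hε
      have hεeq : Δ / (Δ / ε) = ε := by
        field_simp
      have := laplace_shift_le (Δ / ε) hbε Δ (f D) (f D') (hsens D D' hDD') S hS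
      rwa [hεeq] at this
end

section
/- Let ε ≥ 0, δ ∈ [0,1], X a type, n ≥ 1, and let A be a randomized algorithm mapping each tuple in Xⁿ to a probability measure on a measurable output space Ω. Suppose that for all tuples L, L″ ∈ Xⁿ differing in at most one position and all measurable S ⊆ Ω, A(L)(S) ≤ exp(ε)·A(L″)(S) + δ. Let L, L′ ∈ Xⁿ be tuples whose underlying multisets differ by replacing a single element (there exist a multiset E of size n − 1 and d, d′ ∈ X with multiset(L) = E + {d} and multiset(L′) = E + {d′}). Then, with π a uniformly random permutation of {1, …, n} independent of A's internal randomness, for every measurable S ⊆ Ω: Pr[A(L ∘ π) ∈ S] ≤ exp(ε)·Pr[A(L′ ∘ π) ∈ S] + δ. -/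
open MeasureTheory ProbabilityTheory

/-- The symmetric group carries the discrete σ-algebra. -/
instance (n : ℕ) : MeasurableSpace (Equiv.Perm (Fin n)) := ⊤

/-- The multiset of entries of a tuple `L ∈ Xⁿ`. -/
def tupleMultiset {X : Type*} {n : ℕ} (L : Fin n → X) : Multiset X :=
  (Finset.univ : Finset (Fin n)).val.map L

lemma tupleMultiset_succ {X : Type*} {n : ℕ} (f : Fin (n + 1) → X) :
    tupleMultiset f = f 0 ::ₘ tupleMultiset (f ∘ Fin.succ) := by
  unfold tupleMultiset
  rw [Fin.univ_succ, Finset.cons_val, Multiset.map_cons, Finset.map_val, Multiset.map_map]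
  rfl

lemma tupleMultiset_succAbove {X : Type*} {n : ℕ} (g : Fin (n + 1) → X) (j : Fin (n + 1)) :
    tupleMultiset g = g j ::ₘ tupleMultiset (g ∘ j.succAbove) := by
  unfold tupleMultiset
  rw [Fin.univ_succAbove _ j, Finset.cons_val, Multiset.map_cons, Finset.map_val,
    Multiset.map_map]
  rfl

lemma exists_perm_of_tupleMultiset_eq {X : Type*} :
    ∀ {n : ℕ} (f g : Fin n → X), tupleMultiset f = tupleMultiset g →
      ∃ σ : Equiv.Perm (Fin n), ∀ i, f i = g (σ i) := by
  intro n
  induction n with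
  | zero => exact fun f g _ => ⟨1, fun i => i.elim0⟩
  | succ n ih =>
    intro f g h
    have hf0 : f 0 ∈ tupleMultiset g := by
      rw [← h]; exact Multiset.mem_map_of_mem f (Finset.mem_univ 0 : (0 : Fin (n+1)) ∈ _)
    obtain ⟨j, -, hj⟩ := Multiset.mem_map.mp hf0
    rw [tupleMultiset_succ f, tupleMultiset_succAbove g j, hj] at h
    have h' : tupleMultiset (f ∘ Fin.succ) = tupleMultiset (g ∘ j.succAbove) :=
      (Multiset.cons_inj_right _).mp h
    obtain ⟨σ, hσ⟩ := ih _ _ h'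
    refine ⟨(finSuccEquiv n).trans ((Equiv.optionCongr σ).trans (finSuccEquiv' j).symm), ?_⟩
    intro i
    refine Fin.cases ?_ (fun i => ?_) i
    · simp [hj, finSuccEquiv'_symm_none]
    · simpa [finSuccEquiv_succ, finSuccEquiv'_symm_some] using hσ i

instance (n : ℕ) : MeasurableSingletonClass (Equiv.Perm (Fin n)) :=
  ⟨fun _ => trivial⟩

lemma tupleMultiset_eq_ofFn {X : Type*} {n : ℕ} (f : Fin n → X) :
    tupleMultiset f = ↑(List.ofFn f) := by
  simp [tupleMultiset, List.ofFn_eq_map, Fin.univ_def, Finset.univ]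
  rfl

/-- Privacy amplification by a uniformly random permutation.  If a randomized algorithm
`A` on tuples satisfies the `(ε, δ)` indistinguishability bound on tuples differing in at
most one position, and the multisets of `L` and `L'` differ by replacing a single
element, then the mechanisms `π ↦ A (L ∘ π)` and `π ↦ A (L' ∘ π)` (with `π` uniform on
the symmetric group, independent of `A`'s internal randomness) satisfy the same
`(ε, δ)` bound. -/
theorem dp_of_random_permutation
    {X : Type*} {Ω : Type*} [MeasurableSpace Ω]
    (ε δ : ℝ) (hε : 0 ≤ ε) (hδ₀ : 0 ≤ δ) (hδ₁ : δ ≤ 1)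
    (n : ℕ) (hn : 1 ≤ n)
    (A : (Fin n → X) → Measure Ω)
    (hA : ∀ L L'' : Fin n → X, Set.Subsingleton {i : Fin n | L i ≠ L'' i} →
      ∀ S : Set Ω, MeasurableSet S →
        A L S ≤ ENNReal.ofReal (Real.exp ε) * A L'' S + ENNReal.ofReal δ)
    (L L' : Fin n → X)
    (E : Multiset X) (hE : Multiset.card E = n - 1) (d d' : X)
    (hL : tupleMultiset L = E + {d}) (hL' : tupleMultiset L' = E + {d'})
    (S : Set Ω) (hS : MeasurableSet S) :
    ((PMF.uniformOfFintype (Equiv.Perm (Fin n))).toMeasure.bind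
        fun π => A fun i => L (π i)) S ≤
      ENNReal.ofReal (Real.exp ε) *
        ((PMF.uniformOfFintype (Equiv.Perm (Fin n))).toMeasure.bind
          fun π => A fun i => L' (π i)) S + ENNReal.ofReal δ := by
  -- Step 1: build a permutation τ with L and L' ∘ τ differing in at most one position.
  obtain ⟨m, rfl⟩ : ∃ m, n = m + 1 := ⟨n - 1, by omega⟩
  have hlen : E.toList.length = m := by
    rw [Multiset.length_toList, hE]
    omega
  set e : Fin m → X := fun i => E.toList.get (Fin.cast hlen.symm i) with he
  have hME : tupleMultiset e = E := by
    rw [tupleMultiset_eq_ofFn]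
    have : List.ofFn e = E.toList := by
      apply List.ext_get (by simp [hlen])
      intro i h1 h2
      simp [he]
    rw [this, Multiset.coe_toList]
  have hcomp : ∀ x : X, (Fin.cons x e ∘ Fin.succ : Fin m → X) = e :=
    fun x => funext fun i => by simp
  have hK : ∀ x : X, tupleMultiset (Fin.cons x e : Fin (m + 1) → X) = E + {x} := by
    intro x
    rw [tupleMultiset_succ, hcomp, Fin.cons_zero, hME, add_comm, Multiset.singleton_add]
  obtain ⟨σ, hσ⟩ := exists_perm_of_tupleMultiset_eq L (Fin.cons d e) (by rw [hL, hK])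
  obtain ⟨σ', hσ'⟩ := exists_perm_of_tupleMultiset_eq L' (Fin.cons d' e) (by rw [hL', hK])
  set τ : Equiv.Perm (Fin (m + 1)) := σ.trans σ'.symm with hτdef
  have hτ : ∀ i, L i ≠ L' (τ i) → i = σ.symm 0 := by
    intro i hi
    by_contra hne
    apply hi
    have h0 : σ i ≠ 0 := fun h => hne (by rw [← h, Equiv.symm_apply_apply])
    rw [hσ i, hσ' (τ i)]
    have : σ' (τ i) = σ i := by simp [hτdef]
    rw [this]
    rcases Fin.exists_succ_eq.mpr h0 with ⟨k, hk⟩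
    rw [← hk]
    simp
  -- Step 2: measure computation.
  have hmeas : ∀ f : Equiv.Perm (Fin (m + 1)) → Measure Ω, Measurable f :=
    fun f => measurable_from_top
  rw [Measure.bind_apply hS (hmeas _).aemeasurable,
    Measure.bind_apply hS (hmeas _).aemeasurable,
    lintegral_fintype, lintegral_fintype]
  have hc : ∀ π : Equiv.Perm (Fin (m + 1)),
      (PMF.uniformOfFintype (Equiv.Perm (Fin (m + 1)))).toMeasure {π}
        = (Fintype.card (Equiv.Perm (Fin (m + 1))) : ENNReal)⁻¹ := fun π => by
    rw [PMF.toMeasure_apply_singleton _ _ (measurableSet_singleton _),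
      PMF.uniformOfFintype_apply]
  set c : ENNReal := (Fintype.card (Equiv.Perm (Fin (m + 1))) : ENNReal)⁻¹ with hcdef
  simp only [hc]
  calc ∑ π : Equiv.Perm (Fin (m + 1)), (A fun i => L (π i)) S * c
      ≤ ∑ π : Equiv.Perm (Fin (m + 1)),
          (ENNReal.ofReal (Real.exp ε) * (A fun i => L' ((τ * π) i)) S
            + ENNReal.ofReal δ) * c := by
        refine Finset.sum_le_sum fun π _ => ?_
        refine mul_le_mul_left ?_ c
        refine hA _ _ ?_ S hS
        intro i hi j hj
        have hi' : π i = σ.symm 0 := hτ _ hi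
        have hj' : π j = σ.symm 0 := hτ _ hj
        exact π.injective (hi'.trans hj'.symm)
    _ = ENNReal.ofReal (Real.exp ε) *
          (∑ π : Equiv.Perm (Fin (m + 1)), (A fun i => L' ((τ * π) i)) S * c)
          + ENNReal.ofReal δ *
            ∑ _π : Equiv.Perm (Fin (m + 1)), c := by
        simp only [add_mul, Finset.sum_add_distrib, Finset.mul_sum, mul_assoc]
    _ = ENNReal.ofReal (Real.exp ε) *
          (∑ π : Equiv.Perm (Fin (m + 1)), (A fun i => L' (π i)) S * c)
          + ENNReal.ofReal δ := by
        congr 1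
        · congr 1
          exact Fintype.sum_equiv (Equiv.mulLeft τ) _ _ fun π => rfl
        · rw [Finset.sum_const, nsmul_eq_mul, Finset.card_univ, hcdef,
            ENNReal.mul_inv_cancel (by exact_mod_cast Fintype.card_ne_zero)
              (ENNReal.natCast_ne_top _), mul_one]
end
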